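/- In Aut(F(a,b)) modulo Inn(F(a,b)), the subgroup generated by the classes of the automorphisms a ↦ a^{ε₀} b^k, b ↦ b^{ε₁} (for all k ∈ ℤ, ε₀, ε₁ ∈ {±1}) is isomorphic to D_∞ × C₂, where δ: a ↦ ab, b ↦ b has infinite order, α: a ↦ a^{-1}, b ↦ b inverts δ, and ζ: a ↦ a^{-1}, b ↦ b^{-1} is central of order 2. -/

import Mathlib

def innAut (G : Type*) [Group G] : Subgroup (MulAut G) := (MulAut.conj : G →* MulAut G).range

instance innAut_normal (G : Type*) [Group G] : (innAut G).Normal := by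
  constructor
  rintro x ⟨g, rfl⟩ f
  refine ⟨f g, ?_⟩
  ext h
  simp [MulAut.conj_apply, MulAut.mul_apply, mul_assoc]

abbrev Out (G : Type*) [Group G] := MulAut G ⧸ innAut G

def ResiduallyFinite (G : Type*) [Group G] : Prop :=
  ∀ g : G, g ≠ 1 → ∃ N : Subgroup G, N.Normal ∧ Finite (G ⧸ N) ∧ g ∉ N

noncomputable def expSum (i : Fin 2) : FreeGroup (Fin 2) →* Multiplicative ℤ :=
  FreeGroup.lift (fun j => Multiplicative.ofAdd (if j = i then (1 : ℤ) else 0))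

noncomputable def σ (i : Fin 2) (w : FreeGroup (Fin 2)) : ℤ :=
  Multiplicative.toAdd (expSum i w)

def NielsenEquiv {G : Type*} [Group G] {n : ℕ} (Y Z : Fin n → G) : Prop :=
  ∃ φ : FreeGroup (Fin n) ≃* FreeGroup (Fin n),
    ∀ i, FreeGroup.lift Y (φ (FreeGroup.of i)) = Z i

def SameTSystem {G : Type*} [Group G] {n : ℕ} (Y Z : Fin n → G) : Prop :=
  ∃ ψ : G ≃* G, NielsenEquiv (fun i => ψ (Y i)) Z

noncomputable def aF : FreeGroup (Fin 2) := FreeGroup.of 0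
noncomputable def bF : FreeGroup (Fin 2) := FreeGroup.of 1

/-- δ : a ↦ ab, b ↦ b, as an automorphism of F(a,b). -/
noncomputable def δhom : FreeGroup (Fin 2) →* FreeGroup (Fin 2) :=
  FreeGroup.lift (fun t => if t = 0 then aF * bF else bF)
noncomputable def δinv : FreeGroup (Fin 2) →* FreeGroup (Fin 2) :=
  FreeGroup.lift (fun t => if t = 0 then aF * bF⁻¹ else bF)
noncomputable def δA : MulAut (FreeGroup (Fin 2)) :=
  MonoidHom.toMulEquiv δhom δinv
    (by apply FreeGroup.ext_hom; intro t
        fin_cases t <;> simp [δhom, δinv, aF, bF, mul_assoc])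
    (by apply FreeGroup.ext_hom; intro t
        fin_cases t <;> simp [δhom, δinv, aF, bF, mul_assoc])

/-- α : a ↦ a⁻¹, b ↦ b, as an automorphism of F(a,b). -/
noncomputable def αhom : FreeGroup (Fin 2) →* FreeGroup (Fin 2) :=
  FreeGroup.lift (fun t => if t = 0 then aF⁻¹ else bF)
noncomputable def αA : MulAut (FreeGroup (Fin 2)) :=
  MonoidHom.toMulEquiv αhom αhom
    (by apply FreeGroup.ext_hom; intro t; fin_cases t <;> simp [αhom, aF, bF])
    (by apply FreeGroup.ext_hom; intro t; fin_cases t <;> simp [αhom, aF, bF])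

/-- ζ : a ↦ a⁻¹, b ↦ b⁻¹, as an automorphism of F(a,b). -/
noncomputable def ζhom : FreeGroup (Fin 2) →* FreeGroup (Fin 2) :=
  FreeGroup.lift (fun t => if t = 0 then aF⁻¹ else bF⁻¹)
noncomputable def ζA : MulAut (FreeGroup (Fin 2)) :=
  MonoidHom.toMulEquiv ζhom ζhom
    (by apply FreeGroup.ext_hom; intro t; fin_cases t <;> simp [ζhom, aF, bF])
    (by apply FreeGroup.ext_hom; intro t; fin_cases t <;> simp [ζhom, aF, bF])

/-- The subgroup of `Out(F(a,b))` generated by the classes of all automorphisms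
of the form a ↦ a^{ε₀}bᵏ, b ↦ b^{ε₁}. -/
noncomputable def SOut : Subgroup (Out (FreeGroup (Fin 2))) :=
  Subgroup.closure {x | ∃ (φ : MulAut (FreeGroup (Fin 2))) (ε₀ ε₁ k : ℤ),
    (ε₀ = 1 ∨ ε₀ = -1) ∧ (ε₁ = 1 ∨ ε₁ = -1) ∧
    φ aF = aF ^ ε₀ * bF ^ k ∧ φ bF = bF ^ ε₁ ∧ x = QuotientGroup.mk φ}

open FreeGroup in
lemma δA_a : δA aF = aF * bF := by
  show δhom aF = _; simp [δhom, aF, bF]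

lemma δA_b : δA bF = bF := by
  show δhom bF = _; simp [δhom, aF, bF]

lemma αA_a : αA aF = aF⁻¹ := by
  show αhom aF = _; simp [αhom, aF, bF]

lemma αA_b : αA bF = bF := by
  show αhom bF = _; simp [αhom, aF, bF]

lemma ζA_a : ζA aF = aF⁻¹ := by
  show ζhom aF = _; simp [ζhom, aF, bF]

lemma ζA_b : ζA bF = bF⁻¹ := by
  show ζhom bF = _; simp [ζhom, aF, bF]

lemma δA_inv_a : δA⁻¹ aF = aF * bF⁻¹ := by
  rw [MulAut.inv_def, MulEquiv.symm_apply_eq, map_mul, map_inv, δA_a, δA_b]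
  group

lemma δA_inv_b : δA⁻¹ bF = bF := by
  rw [MulAut.inv_def, MulEquiv.symm_apply_eq, δA_b]

lemma δA_zpow_b (n : ℤ) : (δA ^ n) bF = bF := by
  induction n using Int.induction_on with
  | zero => rfl
  | succ k ih => rw [zpow_add_one, MulAut.mul_apply, δA_b, ih]
  | pred k ih => rw [zpow_sub_one, MulAut.mul_apply, δA_inv_b, ih]

lemma δA_zpow_a (n : ℤ) : (δA ^ n) aF = aF * bF ^ n := by
  induction n using Int.induction_on with
  | zero => simp
  | succ k ih =>
      rw [zpow_add_one, MulAut.mul_apply, δA_a, map_mul, ih, δA_zpow_b]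
      group
  | pred k ih =>
      rw [zpow_sub_one, MulAut.mul_apply, δA_inv_a, map_mul, map_inv, ih, δA_zpow_b]
      group

lemma δA_zpow_inv_a (n : ℤ) : (δA ^ n)⁻¹ aF = aF * bF ^ (-n) := by
  rw [← zpow_neg, δA_zpow_a]

lemma δA_zpow_inv_b (n : ℤ) : (δA ^ n)⁻¹ bF = bF := by
  rw [← zpow_neg, δA_zpow_b]
lemma δA_zpow_symm_a (n : ℤ) : (δA ^ n).symm aF = aF * bF ^ (-n) := δA_zpow_inv_a n

lemma δA_zpow_symm_b (n : ℤ) : (δA ^ n).symm bF = bF := δA_zpow_inv_b n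

lemma mulAut_ext {φ ψ : MulAut (FreeGroup (Fin 2))} (h0 : φ aF = ψ aF)
    (h1 : φ bF = ψ bF) : φ = ψ := by
  apply MulEquiv.toMonoidHom_injective
  apply FreeGroup.ext_hom
  intro i
  fin_cases i
  · exact h0
  · exact h1

/-- Canonical representative automorphism with parameters (ε₀, ε₁, k). -/
noncomputable def cAut (ε₀ ε₁ k : ℤ) : MulAut (FreeGroup (Fin 2)) :=
  (if ε₁ = 1 then 1 else ζA) * (if ε₀ = ε₁ then 1 else αA) * δA ^ (ε₁ * k)

lemma cAut_a {ε₀ ε₁ : ℤ} (h0 : ε₀ = 1 ∨ ε₀ = -1) (h1 : ε₁ = 1 ∨ ε₁ = -1) (k : ℤ) :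
    cAut ε₀ ε₁ k aF = aF ^ ε₀ * bF ^ k := by
  rcases h0 with rfl | rfl <;> rcases h1 with rfl | rfl <;>
    simp [cAut, MulAut.mul_apply, δA_zpow_a, δA_zpow_inv_a, δA_zpow_symm_a, map_mul, map_zpow, αA_a, αA_b, ζA_a, ζA_b] <;>
    group

lemma cAut_b {ε₀ ε₁ : ℤ} (h0 : ε₀ = 1 ∨ ε₀ = -1) (h1 : ε₁ = 1 ∨ ε₁ = -1) (k : ℤ) :
    cAut ε₀ ε₁ k bF = bF ^ ε₁ := by
  rcases h0 with rfl | rfl <;> rcases h1 with rfl | rfl <;>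
    simp [cAut, MulAut.mul_apply, δA_zpow_b, δA_zpow_inv_b, δA_zpow_symm_b, map_mul, map_zpow, αA_a, αA_b, ζA_a, ζA_b] <;>
    group

lemma cAut_one : cAut 1 1 0 = 1 := by
  simp [cAut]
lemma mk_conj_eq_one (g : FreeGroup (Fin 2)) :
    (QuotientGroup.mk (MulAut.conj g) : Out (FreeGroup (Fin 2))) = 1 :=
  (QuotientGroup.eq_one_iff _).2 ⟨g, rfl⟩

lemma cAut_mul {ε₀ ε₁ η₀ η₁ : ℤ} (he0 : ε₀ = 1 ∨ ε₀ = -1) (he1 : ε₁ = 1 ∨ ε₁ = -1)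
    (hn0 : η₀ = 1 ∨ η₀ = -1) (hn1 : η₁ = 1 ∨ η₁ = -1) (k l : ℤ) :
    cAut ε₀ ε₁ k * cAut η₀ η₁ l =
      MulAut.conj (bF ^ (if η₀ = 1 then 0 else -k)) *
        cAut (ε₀ * η₀) (ε₁ * η₁) (k * η₀ + ε₁ * l) := by
  have hp0 : ε₀ * η₀ = 1 ∨ ε₀ * η₀ = -1 := by
    rcases he0 with rfl | rfl <;> rcases hn0 with rfl | rfl <;> norm_num
  have hp1 : ε₁ * η₁ = 1 ∨ ε₁ * η₁ = -1 := by
    rcases he1 with rfl | rfl <;> rcases hn1 with rfl | rfl <;> norm_num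
  apply mulAut_ext
  · rw [MulAut.mul_apply, MulAut.mul_apply, cAut_a hn0 hn1, map_mul, map_zpow, map_zpow,
      cAut_a he0 he1, cAut_b he0 he1, cAut_a hp0 hp1, MulAut.conj_apply]
    rcases hn0 with rfl | rfl <;> rcases he0 with rfl | rfl <;> norm_num <;> group
  · rw [MulAut.mul_apply, MulAut.mul_apply, cAut_b hn0 hn1, map_zpow,
      cAut_b he0 he1, cAut_b hp0 hp1, MulAut.conj_apply]
    group

lemma mk_cAut_mul {ε₀ ε₁ η₀ η₁ : ℤ} (he0 : ε₀ = 1 ∨ ε₀ = -1) (he1 : ε₁ = 1 ∨ ε₁ = -1)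
    (hn0 : η₀ = 1 ∨ η₀ = -1) (hn1 : η₁ = 1 ∨ η₁ = -1) (k l : ℤ) :
    (QuotientGroup.mk (cAut ε₀ ε₁ k) : Out (FreeGroup (Fin 2))) * QuotientGroup.mk (cAut η₀ η₁ l)
      = QuotientGroup.mk (cAut (ε₀ * η₀) (ε₁ * η₁) (k * η₀ + ε₁ * l)) := by
  rw [← QuotientGroup.mk_mul, cAut_mul he0 he1 hn0 hn1, QuotientGroup.mk_mul,
    mk_conj_eq_one, one_mul]

lemma mem_SOut_iff (x : Out (FreeGroup (Fin 2))) :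
    x ∈ SOut ↔ ∃ ε₀ ε₁ k : ℤ, (ε₀ = 1 ∨ ε₀ = -1) ∧ (ε₁ = 1 ∨ ε₁ = -1) ∧
      x = QuotientGroup.mk (cAut ε₀ ε₁ k) := by
  constructor
  · intro hx
    induction hx using Subgroup.closure_induction with
    | mem x hx =>
        obtain ⟨φ, ε₀, ε₁, k, he0, he1, ha, hb, rfl⟩ := hx
        refine ⟨ε₀, ε₁, k, he0, he1, ?_⟩
        congr 1
        apply mulAut_ext
        · rw [ha, cAut_a he0 he1]
        · rw [hb, cAut_b he0 he1]
    | one => exact ⟨1, 1, 0, Or.inl rfl, Or.inl rfl, by rw [cAut_one]; rfl⟩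
    | mul x y hx hy ihx ihy =>
        obtain ⟨ε₀, ε₁, k, he0, he1, rfl⟩ := ihx
        obtain ⟨η₀, η₁, l, hn0, hn1, rfl⟩ := ihy
        refine ⟨ε₀ * η₀, ε₁ * η₁, k * η₀ + ε₁ * l, ?_, ?_, ?_⟩
        · rcases he0 with rfl | rfl <;> rcases hn0 with rfl | rfl <;> norm_num
        · rcases he1 with rfl | rfl <;> rcases hn1 with rfl | rfl <;> norm_num
        · exact mk_cAut_mul he0 he1 hn0 hn1 k l
    | inv x hx ihx =>
        obtain ⟨ε₀, ε₁, k, he0, he1, rfl⟩ := ihx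
        refine ⟨ε₀, ε₁, -ε₀ * ε₁ * k, he0, he1, ?_⟩
        rw [eq_comm, eq_inv_iff_mul_eq_one, mk_cAut_mul he0 he1 he0 he1]
        have h1 : ε₀ * ε₀ = 1 := by rcases he0 with rfl | rfl <;> norm_num
        have h2 : ε₁ * ε₁ = 1 := by rcases he1 with rfl | rfl <;> norm_num
        have h3 : (-ε₀ * ε₁ * k) * ε₀ + ε₁ * k = 0 := by
          rcases he0 with rfl | rfl <;> rcases he1 with rfl | rfl <;> ring
        rw [h1, h2, h3, cAut_one]
        rfl
  · rintro ⟨ε₀, ε₁, k, he0, he1, rfl⟩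
    apply Subgroup.subset_closure
    exact ⟨cAut ε₀ ε₁ k, ε₀, ε₁, k, he0, he1, cAut_a he0 he1 k, cAut_b he0 he1 k, rfl⟩
lemma expSum_of (i j : Fin 2) :
    expSum i (FreeGroup.of j) = Multiplicative.ofAdd (if j = i then (1:ℤ) else 0) := by
  simp [expSum]

lemma σ_word0 (e k : ℤ) : σ 0 (aF ^ e * bF ^ k) = e := by
  simp [σ, map_mul, map_zpow, aF, bF, expSum_of]

lemma σ_word1 (e k : ℤ) : σ 1 (aF ^ e * bF ^ k) = k := by
  simp [σ, map_mul, map_zpow, aF, bF, expSum_of]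

lemma σ_wordb (i : Fin 2) (e : ℤ) (w : FreeGroup (Fin 2)) : σ i (w * bF ^ e) = σ i w + (σ i bF) * e := by
  simp [σ, map_mul, map_zpow, mul_comm]

lemma σ_conj (i : Fin 2) (g w : FreeGroup (Fin 2)) : σ i (g * w * g⁻¹) = σ i w := by
  simp only [σ, map_mul, map_inv, toAdd_mul, toAdd_inv]
  ring

/-- characteristic integers of an outer class, via exponent sums. -/
noncomputable def t0 : Out (FreeGroup (Fin 2)) → ℤ :=
  Quotient.lift (fun φ : MulAut (FreeGroup (Fin 2)) => σ 0 (φ aF)) (by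
    intro φ ψ h
    obtain ⟨g, hg⟩ := QuotientGroup.leftRel_apply.mp h
    have : ψ = φ * MulAut.conj g := by rw [hg]; group
    subst this
    simp only [MulAut.mul_apply, MulAut.conj_apply, map_mul, map_inv]
    rw [σ_conj])

noncomputable def t1 : Out (FreeGroup (Fin 2)) → ℤ :=
  Quotient.lift (fun φ : MulAut (FreeGroup (Fin 2)) => σ 1 (φ bF)) (by
    intro φ ψ h
    obtain ⟨g, hg⟩ := QuotientGroup.leftRel_apply.mp h
    have : ψ = φ * MulAut.conj g := by rw [hg]; group
    subst this
    simp only [MulAut.mul_apply, MulAut.conj_apply, map_mul, map_inv]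
    rw [σ_conj])

noncomputable def t2 : Out (FreeGroup (Fin 2)) → ℤ :=
  Quotient.lift (fun φ : MulAut (FreeGroup (Fin 2)) => σ 1 (φ aF)) (by
    intro φ ψ h
    obtain ⟨g, hg⟩ := QuotientGroup.leftRel_apply.mp h
    have : ψ = φ * MulAut.conj g := by rw [hg]; group
    subst this
    simp only [MulAut.mul_apply, MulAut.conj_apply, map_mul, map_inv]
    rw [σ_conj])

lemma t0_mk (φ : MulAut (FreeGroup (Fin 2))) :
    t0 (QuotientGroup.mk φ) = σ 0 (φ aF) := rfl
lemma t1_mk (φ : MulAut (FreeGroup (Fin 2))) :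
    t1 (QuotientGroup.mk φ) = σ 1 (φ bF) := rfl
lemma t2_mk (φ : MulAut (FreeGroup (Fin 2))) :
    t2 (QuotientGroup.mk φ) = σ 1 (φ aF) := rfl

lemma t0_cAut {ε₀ ε₁ : ℤ} (he0 : ε₀ = 1 ∨ ε₀ = -1) (he1 : ε₁ = 1 ∨ ε₁ = -1) (k : ℤ) :
    t0 (QuotientGroup.mk (cAut ε₀ ε₁ k)) = ε₀ := by
  rw [t0_mk, cAut_a he0 he1, σ_word0]

lemma t1_cAut {ε₀ ε₁ : ℤ} (he0 : ε₀ = 1 ∨ ε₀ = -1) (he1 : ε₁ = 1 ∨ ε₁ = -1) (k : ℤ) :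
    t1 (QuotientGroup.mk (cAut ε₀ ε₁ k)) = ε₁ := by
  rw [t1_mk, cAut_b he0 he1]
  have : (bF : FreeGroup (Fin 2)) ^ ε₁ = aF ^ (0:ℤ) * bF ^ ε₁ := by group
  rw [this, σ_word1]

lemma t2_cAut {ε₀ ε₁ : ℤ} (he0 : ε₀ = 1 ∨ ε₀ = -1) (he1 : ε₁ = 1 ∨ ε₁ = -1) (k : ℤ) :
    t2 (QuotientGroup.mk (cAut ε₀ ε₁ k)) = k := by
  rw [t2_mk, cAut_a he0 he1, σ_word1]
noncomputable def Efun (x : Out (FreeGroup (Fin 2))) :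
    DihedralGroup 0 × Multiplicative (ZMod 2) :=
  (if t0 x = t1 x then DihedralGroup.r (t1 x * t2 x) else DihedralGroup.sr (t1 x * t2 x),
   Multiplicative.ofAdd (if t1 x = 1 then 0 else 1))

lemma Efun_cAut {ε₀ ε₁ : ℤ} (he0 : ε₀ = 1 ∨ ε₀ = -1) (he1 : ε₁ = 1 ∨ ε₁ = -1) (k : ℤ) :
    Efun (QuotientGroup.mk (cAut ε₀ ε₁ k)) =
      (if ε₀ = ε₁ then DihedralGroup.r (ε₁ * k) else DihedralGroup.sr (ε₁ * k),
       Multiplicative.ofAdd (if ε₁ = 1 then 0 else 1)) := by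
  rw [Efun, t0_cAut he0 he1, t1_cAut he0 he1, t2_cAut he0 he1]

noncomputable def ES : SOut →* DihedralGroup 0 × Multiplicative (ZMod 2) :=
  MonoidHom.mk' (fun x => Efun x.1) (by
    rintro ⟨x, hx⟩ ⟨y, hy⟩
    obtain ⟨ε₀, ε₁, k, he0, he1, rfl⟩ := (mem_SOut_iff x).1 hx
    obtain ⟨η₀, η₁, l, hn0, hn1, rfl⟩ := (mem_SOut_iff y).1 hy
    show Efun (QuotientGroup.mk (cAut ε₀ ε₁ k) * QuotientGroup.mk (cAut η₀ η₁ l)) =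
      Efun (QuotientGroup.mk (cAut ε₀ ε₁ k)) * Efun (QuotientGroup.mk (cAut η₀ η₁ l))
    have hp0 : ε₀ * η₀ = 1 ∨ ε₀ * η₀ = -1 := by
      rcases he0 with rfl | rfl <;> rcases hn0 with rfl | rfl <;> norm_num
    have hp1 : ε₁ * η₁ = 1 ∨ ε₁ * η₁ = -1 := by
      rcases he1 with rfl | rfl <;> rcases hn1 with rfl | rfl <;> norm_num
    rw [mk_cAut_mul he0 he1 hn0 hn1, Efun_cAut hp0 hp1, Efun_cAut he0 he1,
      Efun_cAut hn0 hn1]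
    rcases he0 with rfl | rfl <;> rcases he1 with rfl | rfl <;>
      rcases hn0 with rfl | rfl <;> rcases hn1 with rfl | rfl <;>
      norm_num [Prod.ext_iff, DihedralGroup.r_mul_r, DihedralGroup.r_mul_sr,
        DihedralGroup.sr_mul_r, DihedralGroup.sr_mul_sr, ← ofAdd_add] <;>
      first
        | decide
        | ring1
        | exact ⟨by ring1, by decide⟩
        | exact (congrArg _ (by simp only [ZMod]; omega)).trans (DihedralGroup.r_mul_r _ _).symm
        | exact (congrArg _ (by simp only [ZMod]; omega)).trans (DihedralGroup.r_mul_sr _ _).symm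
        | exact (congrArg _ (by simp only [ZMod]; omega)).trans (DihedralGroup.sr_mul_r _ _).symm
        | exact (congrArg _ (by simp only [ZMod]; omega)).trans (DihedralGroup.sr_mul_sr _ _).symm
        | exact ⟨(congrArg _ (by simp only [ZMod]; omega)).trans (DihedralGroup.r_mul_r _ _).symm, by decide⟩
        | exact ⟨(congrArg _ (by simp only [ZMod]; omega)).trans (DihedralGroup.r_mul_sr _ _).symm, by decide⟩
        | exact ⟨(congrArg _ (by simp only [ZMod]; omega)).trans (DihedralGroup.sr_mul_r _ _).symm, by decide⟩
        | exact ⟨(congrArg _ (by simp only [ZMod]; omega)).trans (DihedralGroup.sr_mul_sr _ _).symm, by decide⟩)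

lemma ES_apply (x : SOut) : ES x = Efun x.1 := rfl

lemma ES_params {ε₀ ε₁ η₀ η₁ : ℤ} (he0 : ε₀ = 1 ∨ ε₀ = -1) (he1 : ε₁ = 1 ∨ ε₁ = -1)
    (hn0 : η₀ = 1 ∨ η₀ = -1) (hn1 : η₁ = 1 ∨ η₁ = -1) (k l : ℤ)
    (h1 : (if ε₀ = ε₁ then DihedralGroup.r (ε₁ * k) else DihedralGroup.sr (ε₁ * k) : DihedralGroup 0)
        = (if η₀ = η₁ then DihedralGroup.r (η₁ * l) else DihedralGroup.sr (η₁ * l)))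
    (h2 : (Multiplicative.ofAdd (if ε₁ = 1 then 0 else 1) : Multiplicative (ZMod 2))
        = Multiplicative.ofAdd (if η₁ = 1 then 0 else 1)) :
    ε₀ = η₀ ∧ ε₁ = η₁ ∧ k = l := by
  rcases he0 with rfl | rfl <;> rcases he1 with rfl | rfl <;>
    rcases hn0 with rfl | rfl <;> rcases hn1 with rfl | rfl <;>
    norm_num at h1 h2 <;> norm_num <;>
    first
      | exact h1
      | (injection h1; done)
      | exact absurd h2 (by decide)
      | (injection h1 with h; exact h)
      | (injection h1 with h; exact neg_inj.mp h)

lemma ES_injective : Function.Injective ES := by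
  rintro ⟨x, hx⟩ ⟨y, hy⟩ h
  obtain ⟨ε₀, ε₁, k, he0, he1, rfl⟩ := (mem_SOut_iff x).1 hx
  obtain ⟨η₀, η₁, l, hn0, hn1, rfl⟩ := (mem_SOut_iff y).1 hy
  have h' : Efun (QuotientGroup.mk (cAut ε₀ ε₁ k)) = Efun (QuotientGroup.mk (cAut η₀ η₁ l)) := h
  rw [Efun_cAut he0 he1, Efun_cAut hn0 hn1, Prod.ext_iff] at h'
  obtain ⟨e0, e1, e2⟩ := ES_params he0 he1 hn0 hn1 k l h'.1 h'.2
  subst e0; subst e1; subst e2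
  rfl

lemma ES_surjective : Function.Surjective ES := by
  rintro ⟨d, u⟩
  have hu : u = Multiplicative.ofAdd 0 ∨ u = Multiplicative.ofAdd 1 := by
    revert u; decide
  cases d with
  | r m =>
      rcases hu with rfl | rfl
      · refine ⟨⟨_, (mem_SOut_iff _).2 ⟨1, 1, (show ℤ from m), Or.inl rfl, Or.inl rfl, rfl⟩⟩, ?_⟩
        show Efun _ = _
        rw [Efun_cAut (Or.inl rfl) (Or.inl rfl)]
        norm_num
        exact congrArg _ (Int.one_mul m)
      · refine ⟨⟨_, (mem_SOut_iff _).2 ⟨-1, -1, -(show ℤ from m), Or.inr rfl, Or.inr rfl, rfl⟩⟩, ?_⟩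
        show Efun _ = _
        rw [Efun_cAut (Or.inr rfl) (Or.inr rfl)]
        norm_num
        exact congrArg _ (Int.neg_neg m)
  | sr m =>
      rcases hu with rfl | rfl
      · refine ⟨⟨_, (mem_SOut_iff _).2 ⟨-1, 1, (show ℤ from m), Or.inr rfl, Or.inl rfl, rfl⟩⟩, ?_⟩
        show Efun _ = _
        rw [Efun_cAut (Or.inr rfl) (Or.inl rfl)]
        norm_num
        exact congrArg _ (Int.one_mul m)
      · refine ⟨⟨_, (mem_SOut_iff _).2 ⟨1, -1, -(show ℤ from m), Or.inl rfl, Or.inr rfl, rfl⟩⟩, ?_⟩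
        show Efun _ = _
        rw [Efun_cAut (Or.inl rfl) (Or.inr rfl)]
        norm_num
        exact congrArg _ (Int.neg_neg m)

lemma cAut_δ : cAut 1 1 1 = δA := by simp [cAut]
lemma cAut_α : cAut (-1) 1 0 = αA := by norm_num [cAut]
lemma cAut_ζ : cAut (-1) (-1) 0 = ζA := by norm_num [cAut]
theorem statement_11 :
    ∃ e : SOut ≃* DihedralGroup 0 × Multiplicative (ZMod 2),
      (∀ h : (QuotientGroup.mk δA : Out (FreeGroup (Fin 2))) ∈ SOut,
        e ⟨_, h⟩ = (DihedralGroup.r 1, 1)) ∧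
      (∀ h : (QuotientGroup.mk αA : Out (FreeGroup (Fin 2))) ∈ SOut,
        e ⟨_, h⟩ = (DihedralGroup.sr 0, 1)) ∧
      (∀ h : (QuotientGroup.mk ζA : Out (FreeGroup (Fin 2))) ∈ SOut,
        e ⟨_, h⟩ = (1, Multiplicative.ofAdd 1)) := by
  refine ⟨MulEquiv.ofBijective ES ⟨ES_injective, ES_surjective⟩, ?_, ?_, ?_⟩
  · intro h
    show ES ⟨_, h⟩ = _
    rw [ES_apply]
    show Efun (QuotientGroup.mk δA) = _
    rw [← cAut_δ, Efun_cAut (Or.inl rfl) (Or.inl rfl)]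
    norm_num
    rfl
  · intro h
    show ES ⟨_, h⟩ = _
    rw [ES_apply]
    show Efun (QuotientGroup.mk αA) = _
    rw [← cAut_α, Efun_cAut (Or.inr rfl) (Or.inl rfl)]
    norm_num
    rfl
  · intro h
    show ES ⟨_, h⟩ = _
    rw [ES_apply]
    show Efun (QuotientGroup.mk ζA) = _
    rw [← cAut_ζ, Efun_cAut (Or.inr rfl) (Or.inr rfl)]
    norm_num
    constructor <;> rfl
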